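/- Let m ≥ 2 and let A, B be complex random samples as in the context with 𝔼[A] = 0. Then the estimator c₃⁽ᶜᵈ⁾ = (m/(m−1))·( \overline{|A|²B} − \overline{|A|²}·B̄ ) satisfies 𝔼[c₃⁽ᶜᵈ⁾] = 𝔼[|A|²B] − 𝔼[|A|²]𝔼[B], which under the hypothesis 𝔼[A]=0 equals the third cumulant C₃(a, a*, b). -/

import Mathlib

open MeasureTheory ProbabilityTheory
open scoped ENNReal

noncomputable def cum3 {Ω : Type*} [MeasurableSpace Ω] (μ : MeasureTheory.Measure Ω)
    (x y z : Ω → ℂ) : ℂ :=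
  (∫ ω, x ω * y ω * z ω ∂μ)
  - (∫ ω, x ω * y ω ∂μ) * (∫ ω, z ω ∂μ)
  - (∫ ω, x ω * z ω ∂μ) * (∫ ω, y ω ∂μ)
  - (∫ ω, y ω * z ω ∂μ) * (∫ ω, x ω ∂μ)
  + 2 * (∫ ω, x ω ∂μ) * (∫ ω, y ω ∂μ) * (∫ ω, z ω ∂μ)

lemma measurable_conj_complex : Measurable (starRingEnd ℂ) :=
  RCLike.continuous_conj.measurable

/-- The integral of a product of two independent complex random variables is the
product of the integrals. -/
lemma indep_integral_mul_c {Ω : Type*} [MeasurableSpace Ω] {μ : Measure Ω}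
    [IsProbabilityMeasure μ] {X Y : Ω → ℂ} (h : IndepFun X Y μ)
    (hXm : Measurable X) (hYm : Measurable Y) :
    ∫ ω, X ω * Y ω ∂μ = (∫ ω, X ω ∂μ) * (∫ ω, Y ω ∂μ) := by
  have hmap := (indepFun_iff_map_prod_eq_prod_map_map hXm.aemeasurable hYm.aemeasurable).mp h
  have h1 : ∫ ω, X ω * Y ω ∂μ
      = ∫ p : ℂ × ℂ, p.1 * p.2 ∂(μ.map fun ω => (X ω, Y ω)) := by
    rw [integral_map (hXm.prodMk hYm).aemeasurable (f := fun p : ℂ × ℂ => p.1 * p.2)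
      ((continuous_fst.mul continuous_snd).aestronglyMeasurable)]
  have h2 : (∫ x : ℂ, x ∂(μ.map X)) = ∫ ω, X ω ∂μ :=
    integral_map hXm.aemeasurable aestronglyMeasurable_id
  have h3 : (∫ y : ℂ, y ∂(μ.map Y)) = ∫ ω, Y ω ∂μ :=
    integral_map hYm.aemeasurable aestronglyMeasurable_id
  rw [h1, hmap, integral_prod_mul (fun x : ℂ => x) (fun y : ℂ => y), h2, h3]

theorem unbiased_aux {Ω : Type*} [MeasurableSpace Ω] (μ : Measure Ω) [IsProbabilityMeasure μ]
    (m : ℕ) (hm : 2 ≤ m)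
    (A B : Fin m → Ω → ℂ)
    (hAmeas : ∀ i, Measurable (A i))
    (hBmeas : ∀ i, Measurable (B i))
    (hindep : iIndepFun (fun i ω => (A i ω, B i ω)) μ)
    (i0 : Fin m)
    (hident : ∀ i, IdentDistrib (fun ω => (A i ω, B i ω)) (fun ω => (A i0 ω, B i0 ω)) μ μ)
    (hA : MemLp (A i0) 3 μ)
    (hB : MemLp (B i0) 3 μ) :
    (∫ ω, ((m:ℂ) / ((m:ℂ)-1)) * (((m:ℂ)⁻¹ * ∑ i, A i ω * (starRingEnd ℂ) (A i ω) * B i ω) - ((m:ℂ)⁻¹ * ∑ i, A i ω * (starRingEnd ℂ) (A i ω)) * ((m:ℂ)⁻¹ * ∑ i, B i ω)) ∂μ)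
      = (∫ ω, A i0 ω * (starRingEnd ℂ) (A i0 ω) * B i0 ω ∂μ)
        - (∫ ω, A i0 ω * (starRingEnd ℂ) (A i0 ω) ∂μ) * (∫ ω, B i0 ω ∂μ) := by
  have hm0 : (m:ℂ) ≠ 0 := by
    simp only [ne_eq, Nat.cast_eq_zero]; omega
  have hm1 : (m:ℂ) - 1 ≠ 0 := by
    intro h
    have h2 : (m:ℂ) = 1 := by linear_combination h
    have h3 : m = 1 := by exact_mod_cast h2
    omega
  -- measurability of the various maps
  have hφf : Measurable (fun v : ℂ × ℂ => v.1 * (starRingEnd ℂ) v.1 * v.2) :=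
    (measurable_fst.mul (measurable_conj_complex.comp measurable_fst)).mul measurable_snd
  have hφg : Measurable (fun v : ℂ × ℂ => v.1 * (starRingEnd ℂ) v.1) :=
    measurable_fst.mul (measurable_conj_complex.comp measurable_fst)
  have hgmeas : ∀ i, Measurable (fun ω => A i ω * (starRingEnd ℂ) (A i ω)) := fun i =>
    (hAmeas i).mul (measurable_conj_complex.comp (hAmeas i))
  -- identically distributed components
  have hAid : ∀ i, IdentDistrib (A i) (A i0) μ μ := fun i =>
    (hident i).comp measurable_fst
  have hBid : ∀ i, IdentDistrib (B i) (B i0) μ μ := fun i =>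
    (hident i).comp measurable_snd
  have hA3 : ∀ i, MemLp (A i) 3 μ := fun i => (hAid i).symm.memLp_snd hA
  have hB3 : ∀ i, MemLp (B i) 3 μ := fun i => (hBid i).symm.memLp_snd hB
  have hA3c : ∀ i, MemLp (fun ω => (starRingEnd ℂ) (A i ω)) 3 μ := fun i =>
    ⟨RCLike.continuous_conj.comp_aestronglyMeasurable (hA3 i).1,
      (eLpNorm_conj (A i) 3 μ).trans_lt (hA3 i).2⟩
  -- Hölder exponent arithmetic in ℝ≥0∞
  have hexp1 : (1 : ℝ≥0∞) / (3/2) = 1/3 + 1/3 := by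
    rw [ENNReal.div_add_div_same, one_div, ENNReal.inv_div (by norm_num) (by norm_num)]
    norm_num
  have hexp2 : (1 : ℝ≥0∞) / 1 = 1/(3/2) + 1/3 := by
    rw [show (1:ℝ≥0∞)/(3/2) = 2/3 from by
      rw [one_div, ENNReal.inv_div (by norm_num) (by norm_num)],
      ENNReal.div_add_div_same]
    norm_num
    rw [ENNReal.div_self (by norm_num) (by norm_num)]
  haveI hH1 : ENNReal.HolderTriple 3 3 (3/2) := ⟨by simp only [← one_div]; exact hexp1.symm⟩
  haveI hH2 : ENNReal.HolderTriple (3/2) 3 1 := ⟨by simp only [← one_div]; exact hexp2.symm⟩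
  -- membership in Lp
  have hg32 : ∀ i, MemLp (fun ω => A i ω * (starRingEnd ℂ) (A i ω)) (3/2) μ := fun i =>
    MemLp.smul (hA3c i) (hA3 i)
  have hf1 : ∀ i, MemLp (fun ω => A i ω * (starRingEnd ℂ) (A i ω) * B i ω) 1 μ := fun i =>
    MemLp.smul (hB3 i) (hg32 i)
  -- integrability
  have hfint : ∀ i, Integrable (fun ω => A i ω * (starRingEnd ℂ) (A i ω) * B i ω) μ := fun i =>
    memLp_one_iff_integrable.mp (hf1 i)
  have hgint : ∀ i, Integrable (fun ω => A i ω * (starRingEnd ℂ) (A i ω)) μ := fun i =>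
    memLp_one_iff_integrable.mp ((hg32 i).mono_exponent (by
      rw [ENNReal.le_div_iff_mul_le (Or.inl (by norm_num)) (Or.inl (by norm_num))]
      norm_num))
  have hBint : ∀ i, Integrable (B i) μ := fun i =>
    memLp_one_iff_integrable.mp ((hB3 i).mono_exponent (by norm_num))
  -- independence of |A i|² and B j for i ≠ j
  have hindepgb : ∀ i j, i ≠ j →
      IndepFun (fun ω => A i ω * (starRingEnd ℂ) (A i ω)) (B j) μ := fun i j hij =>
    (hindep.indepFun hij).comp hφg measurable_snd
  -- integrability of cross terms
  have hgB : ∀ i j, Integrable (fun ω => A i ω * (starRingEnd ℂ) (A i ω) * B j ω) μ := by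
    intro i j
    rcases eq_or_ne i j with rfl | hij
    · exact hfint i
    · exact (hindepgb i j hij).integrable_mul (hgint i) (hBint j)
  -- equal expectations via identical distribution
  have hint_f : ∀ i, ∫ ω, A i ω * (starRingEnd ℂ) (A i ω) * B i ω ∂μ
      = ∫ ω, A i0 ω * (starRingEnd ℂ) (A i0 ω) * B i0 ω ∂μ := fun i =>
    ((hident i).comp hφf).integral_eq
  have hint_g : ∀ i, ∫ ω, A i ω * (starRingEnd ℂ) (A i ω) ∂μ
      = ∫ ω, A i0 ω * (starRingEnd ℂ) (A i0 ω) ∂μ := fun i =>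
    ((hident i).comp hφg).integral_eq
  have hint_B : ∀ i, ∫ ω, B i ω ∂μ = ∫ ω, B i0 ω ∂μ := fun i => (hBid i).integral_eq
  -- expectation of cross terms
  have hprod : ∀ i j, i ≠ j → ∫ ω, A i ω * (starRingEnd ℂ) (A i ω) * B j ω ∂μ
      = (∫ ω, A i0 ω * (starRingEnd ℂ) (A i0 ω) ∂μ) * (∫ ω, B i0 ω ∂μ) := by
    intro i j hij
    have h : ∫ ω, A i ω * (starRingEnd ℂ) (A i ω) * B j ω ∂μ
        = (∫ ω, A i ω * (starRingEnd ℂ) (A i ω) ∂μ) * (∫ ω, B j ω ∂μ) :=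
      indep_integral_mul_c (hindepgb i j hij) (hgmeas i) (hBmeas j)
    rw [h, hint_g i, hint_B j]
  -- inner sums
  have hsumj : ∀ i : Fin m, (∑ j, ∫ ω, A i ω * (starRingEnd ℂ) (A i ω) * B j ω ∂μ)
      = (∫ ω, A i0 ω * (starRingEnd ℂ) (A i0 ω) * B i0 ω ∂μ)
        + ((m:ℂ) - 1) * ((∫ ω, A i0 ω * (starRingEnd ℂ) (A i0 ω) ∂μ) * (∫ ω, B i0 ω ∂μ)) := by
    intro i
    rw [← Finset.add_sum_erase _ _ (Finset.mem_univ i)]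
    congr 1
    · exact hint_f i
    · rw [Finset.sum_congr rfl (fun j hj => hprod i j (Finset.ne_of_mem_erase hj).symm),
        Finset.sum_const, Finset.card_erase_of_mem (Finset.mem_univ i), Finset.card_univ,
        Fintype.card_fin, nsmul_eq_mul, Nat.cast_sub (by omega : 1 ≤ m), Nat.cast_one]
  -- total integrals of the two sums
  have hS1 : ∫ ω, (∑ i, A i ω * (starRingEnd ℂ) (A i ω) * B i ω) ∂μ
      = (m:ℂ) * (∫ ω, A i0 ω * (starRingEnd ℂ) (A i0 ω) * B i0 ω ∂μ) := by
    rw [integral_finset_sum _ (fun i _ => hfint i),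
      Finset.sum_congr rfl (fun i _ => hint_f i),
      Finset.sum_const, Finset.card_univ, Fintype.card_fin, nsmul_eq_mul]
  have hS2 : ∫ ω, (∑ i, ∑ j, A i ω * (starRingEnd ℂ) (A i ω) * B j ω) ∂μ
      = (m:ℂ) * ((∫ ω, A i0 ω * (starRingEnd ℂ) (A i0 ω) * B i0 ω ∂μ)
        + ((m:ℂ) - 1) * ((∫ ω, A i0 ω * (starRingEnd ℂ) (A i0 ω) ∂μ) * (∫ ω, B i0 ω ∂μ))) := by
    rw [integral_finset_sum _ (fun i _ => integrable_finset_sum _ fun j _ => hgB i j),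
      Finset.sum_congr rfl (fun i _ => integral_finset_sum _ fun j _ => hgB i j),
      Finset.sum_congr rfl (fun i _ => hsumj i),
      Finset.sum_const, Finset.card_univ, Fintype.card_fin, nsmul_eq_mul]
  -- rewrite the integrand
  have hrw : (∫ ω, ((m:ℂ) / ((m:ℂ)-1)) * (((m:ℂ)⁻¹ * ∑ i, A i ω * (starRingEnd ℂ) (A i ω) * B i ω) - ((m:ℂ)⁻¹ * ∑ i, A i ω * (starRingEnd ℂ) (A i ω)) * ((m:ℂ)⁻¹ * ∑ i, B i ω)) ∂μ)
      = ∫ ω, (((m:ℂ) / ((m:ℂ)-1)) * (m:ℂ)⁻¹) * (∑ i, A i ω * (starRingEnd ℂ) (A i ω) * B i ω)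
          - (((m:ℂ) / ((m:ℂ)-1)) * ((m:ℂ)⁻¹ * (m:ℂ)⁻¹))
            * (∑ i, ∑ j, A i ω * (starRingEnd ℂ) (A i ω) * B j ω) ∂μ := by
    refine integral_congr_ae (Filter.Eventually.of_forall fun ω => ?_)
    dsimp only
    have hD : (∑ i, A i ω * (starRingEnd ℂ) (A i ω)) * (∑ j, B j ω)
        = ∑ i, ∑ j, A i ω * (starRingEnd ℂ) (A i ω) * B j ω :=
      Finset.sum_mul_sum _ _ _ _
    rw [← hD]; ring
  have hI1 : Integrable (fun ω => (((m:ℂ) / ((m:ℂ)-1)) * (m:ℂ)⁻¹)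
      * (∑ i, A i ω * (starRingEnd ℂ) (A i ω) * B i ω)) μ :=
    (integrable_finset_sum _ fun i _ => hfint i).const_mul _
  have hI2 : Integrable (fun ω => (((m:ℂ) / ((m:ℂ)-1)) * ((m:ℂ)⁻¹ * (m:ℂ)⁻¹))
      * (∑ i, ∑ j, A i ω * (starRingEnd ℂ) (A i ω) * B j ω)) μ :=
    (integrable_finset_sum _ fun i _ => integrable_finset_sum _ fun j _ => hgB i j).const_mul _
  rw [hrw, integral_sub hI1 hI2, integral_const_mul, integral_const_mul, hS1, hS2]
  field_simp
  ring

theorem unbiased_c3_cd {Ω : Type*} [MeasurableSpace Ω] (μ : Measure Ω) [IsProbabilityMeasure μ]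
    (m : ℕ) (hm : 2 ≤ m)
    (A B : Fin m → Ω → ℂ)
    (hAmeas : ∀ i, Measurable (A i))
    (hBmeas : ∀ i, Measurable (B i))
    (hindep : iIndepFun (fun i ω => (A i ω, B i ω)) μ)
    (hident : ∀ i, IdentDistrib (fun ω => (A i ω, B i ω)) (fun ω => (A ⟨0, by omega⟩ ω, B ⟨0, by omega⟩ ω)) μ μ)
    (hA : MemLp (A ⟨0, by omega⟩) 3 μ)
    (hB : MemLp (B ⟨0, by omega⟩) 3 μ)
    (hEA : (∫ ω, A ⟨0, by omega⟩ ω ∂μ) = 0) :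
    (∫ ω, ((m:ℂ) / ((m:ℂ)-1)) * (((m:ℂ)⁻¹ * ∑ i, A i ω * (starRingEnd ℂ) (A i ω) * B i ω) - ((m:ℂ)⁻¹ * ∑ i, A i ω * (starRingEnd ℂ) (A i ω)) * ((m:ℂ)⁻¹ * ∑ i, B i ω)) ∂μ) = (∫ ω, A ⟨0, by omega⟩ ω * (starRingEnd ℂ) (A ⟨0, by omega⟩ ω) * B ⟨0, by omega⟩ ω ∂μ) - (∫ ω, A ⟨0, by omega⟩ ω * (starRingEnd ℂ) (A ⟨0, by omega⟩ ω) ∂μ) * (∫ ω, B ⟨0, by omega⟩ ω ∂μ) ∧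
    (∫ ω, A ⟨0, by omega⟩ ω * (starRingEnd ℂ) (A ⟨0, by omega⟩ ω) * B ⟨0, by omega⟩ ω ∂μ) - (∫ ω, A ⟨0, by omega⟩ ω * (starRingEnd ℂ) (A ⟨0, by omega⟩ ω) ∂μ) * (∫ ω, B ⟨0, by omega⟩ ω ∂μ) = cum3 μ (A ⟨0, by omega⟩) (fun ω => (starRingEnd ℂ) (A ⟨0, by omega⟩ ω)) (B ⟨0, by omega⟩) := by
  constructor
  · exact unbiased_aux μ m hm A B hAmeas hBmeas hindep ⟨0, by omega⟩ hident hA hB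
  · have hconj : (∫ ω, (starRingEnd ℂ) (A ⟨0, by omega⟩ ω) ∂μ) = 0 := by
      rw [integral_conj, hEA, map_zero]
    simp only [cum3, hEA, hconj, mul_zero, zero_mul, sub_zero, add_zero]
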